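/- Let κ < 𝔡 be a cardinal and let ⟨I_α : α < κ⟩ be a sequence of interval partitions. Then there exists an interval partition J such that for each α < κ there are infinitely many n for which some k > n satisfies I_{α,k} ⊆ J_n. -/

import Mathlib

open Filter Set Cardinal

/-- An interval partition is a strictly increasing `I : ℕ → ℕ` with `I 0 = 0`;
the `n`-th interval is `[I n, I (n+1))`. -/
def IsIntervalPartition (I : ℕ → ℕ) : Prop := I 0 = 0 ∧ StrictMono I

/-- The dominating number `𝔡`. -/
noncomputable def frakD : Cardinal :=
  sInf { κc : Cardinal | ∃ D : Set (ℕ → ℕ), #D = κc ∧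
    ∀ f : ℕ → ℕ, ∃ g ∈ D, ∀ᶠ n in atTop, f n ≤ g n }

/-- Lemma: given fewer than `𝔡` many interval partitions `⟨I_α : α < κ⟩`, there is a
single interval partition `J` such that for each `α` there are infinitely many `n` with
some `k > n` satisfying `I_{α,k} ⊆ J_n`. -/
theorem stmt16 {α : Type} (hκ : #α < frakD) (I : α → ℕ → ℕ)
    (hI : ∀ a : α, IsIntervalPartition (I a)) :
    ∃ J : ℕ → ℕ, IsIntervalPartition J ∧ ∀ a : α,
      {n : ℕ | ∃ k > n,
        Set.Ico (I a k) (I a (k + 1)) ⊆ Set.Ico (J n) (J (n + 1))}.Infinite := by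
  classical
  set F : α → ℕ → ℕ := fun a m => I a (I a (m + 2) + 2) with hF
  -- Since #α < 𝔡, the family {F a} is not dominating: some g beats each F a infinitely often.
  have hg : ∃ g : ℕ → ℕ, ∀ a, ∃ᶠ m in atTop, F a m < g m := by
    by_contra h
    push_neg at h
    have hdom : ∀ f : ℕ → ℕ, ∃ g ∈ Set.range F, ∀ᶠ n in atTop, f n ≤ g n := by
      intro f
      obtain ⟨a, ha⟩ := h f
      refine ⟨F a, Set.mem_range_self a, ?_⟩
      filter_upwards [ha] with n hn
      omega
    have hmem : #(Set.range F) ∈ { κc : Cardinal | ∃ D : Set (ℕ → ℕ), #D = κc ∧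
        ∀ f : ℕ → ℕ, ∃ g ∈ D, ∀ᶠ n in atTop, f n ≤ g n } :=
      ⟨Set.range F, rfl, hdom⟩
    have h1 : frakD ≤ #(Set.range F) := csInf_le' hmem
    have h2 : #(Set.range F) ≤ #α := Cardinal.mk_range_le
    exact absurd ((h1.trans h2).trans_lt hκ) (lt_irrefl _)
  obtain ⟨g, hg⟩ := hg
  -- Monotone majorant of g.
  set G : ℕ → ℕ := fun m => m + 1 + (Finset.range (m + 1)).sup g with hGdef
  have hGg : ∀ m, g m ≤ G m := by
    intro m
    have : g m ≤ (Finset.range (m + 1)).sup g :=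
      Finset.le_sup (Finset.self_mem_range_succ m)
    simp only [hGdef]; omega
  have hGmono : Monotone G := by
    intro m m' hmm
    have : (Finset.range (m + 1)).sup g ≤ (Finset.range (m' + 1)).sup g :=
      Finset.sup_mono (Finset.range_subset_range.2 (by omega))
    simp only [hGdef]; omega
  have hGlt : ∀ m, m < G m := fun m => by simp only [hGdef]; omega
  -- The interval partition J.
  set J : ℕ → ℕ := fun n => G^[n] 0 with hJdef
  have hJ0 : J 0 = 0 := rfl
  have hJsucc : ∀ n, J (n + 1) = G (J n) := fun n => Function.iterate_succ_apply' G n 0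
  have hJmono : StrictMono J :=
    strictMono_nat_of_lt_succ (fun n => by rw [hJsucc]; exact hGlt _)
  have hJle : ∀ n, n ≤ J n := fun n => hJmono.le_apply
  refine ⟨J, ⟨hJ0, hJmono⟩, fun a => ?_⟩
  have hIa : StrictMono (I a) := (hI a).2
  have hIle : ∀ j, j ≤ I a j := fun j => hIa.le_apply
  apply Set.infinite_of_not_bddAbove
  rintro ⟨N, hN⟩
  -- Find a "good" m beyond J (N+1).
  obtain ⟨m, hm1, hm2⟩ :=
    ((hg a).and_eventually (eventually_ge_atTop (J (N + 1)))).exists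
  -- Locate m between consecutive J values.
  have hex : ∃ n, m < J n := ⟨m + 1, lt_of_lt_of_le (Nat.lt_succ_self m) (hJle (m + 1))⟩
  set nn := Nat.find hex with hnn
  have hnn1 : m < J nn := Nat.find_spec hex
  have hnnpos : 0 < nn := by
    rcases Nat.eq_zero_or_pos nn with h0 | h
    · exfalso; rw [h0] at hnn1; rw [hJ0] at hnn1; omega
    · exact h
  obtain ⟨n, hn⟩ : ∃ n, nn = n + 1 := ⟨nn - 1, by omega⟩
  rw [hn] at hnn1
  have hJnm : J n ≤ m := by
    by_contra hcon
    exact Nat.find_min hex (m := n) (by omega) (by omega)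
  have hNn : N < n := by
    by_contra hcon
    have : J (n + 1) ≤ J (N + 1) := hJmono.monotone (by omega)
    omega
  -- The element of the target set that exceeds N.
  have key : ∃ l, N < l ∧ l ∈ {n : ℕ | ∃ k > n,
      Set.Ico (I a k) (I a (k + 1)) ⊆ Set.Ico (J n) (J (n + 1))} := by
    by_cases hp : I a (m + 2) ≤ J (n + 1)
    · -- interval [I a (m+1), I a (m+2)) fits in [J n, J (n+1))
      refine ⟨n, hNn, ⟨m + 1, by have := hJle n; omega, ?_⟩⟩
      apply Set.Ico_subset_Ico
      · have := hIle (m + 1); omega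
      · exact hp
    · -- interval [I a (p+1), I a (p+2)) fits in [J (n+1), J (n+2)), p = I a (m+2)
      push_neg at hp
      set p := I a (m + 2) with hpdef
      refine ⟨n + 1, by omega, ⟨p + 1, ?_, ?_⟩⟩
      · have := hJle (n + 1); omega
      · apply Set.Ico_subset_Ico
        · have := hIle (p + 1); omega
        · have h1 : F a m < g m := hm1
          have h2 : g m ≤ G m := hGg m
          have h3 : G m ≤ G (J (n + 1)) := hGmono (by omega)
          have h4 : G (J (n + 1)) = J (n + 2) := (hJsucc (n + 1)).symm
          have h5 : F a m = I a (p + 2) := rfl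
          have h6 : I a (p + 1 + 1) = I a (p + 2) := by norm_num
          have h7 : J (n + 1 + 1) = J (n + 2) := by norm_num
          omega
  obtain ⟨l, hl1, hl2⟩ := key
  have := hN hl2
  omega
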